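/- The function W¹(u) = sup_{k∈ℕ} liminf_{T→∞} (1/(kT))·∑_{t=1}^{kT} u_t on ℓ^∞ respects the fixed-step catching-up criterion: if there exists k ∈ ℕ such that ∑_{t=1}^{kT} u_t ≥ ∑_{t=1}^{kT} v_t for all T ∈ ℕ, then W¹(u) ≥ W¹(v). -/

import Mathlib

open Filter

def Bdd (u : ℕ → ℝ) : Prop := ∃ C : ℝ, ∀ t, |u t| ≤ C

noncomputable def avg (u : ℕ → ℝ) (T : ℕ) : ℝ := (∑ t ∈ Finset.range T, u t) / T

noncomputable def W1 (u : ℕ → ℝ) : ℝ :=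
  ⨆ k : ℕ, liminf (fun T : ℕ => avg u ((k + 1) * T)) atTop

lemma avg_bdd {u : ℕ → ℝ} (hu : Bdd u) : ∃ C : ℝ, 0 ≤ C ∧ ∀ T, |avg u T| ≤ C := by
  obtain ⟨C, hC⟩ := hu
  refine ⟨max C 0, le_max_right _ _, fun T => ?_⟩
  rcases Nat.eq_zero_or_pos T with h | h
  · simp [avg, h, le_max_right]
  · have hsum : |∑ t ∈ Finset.range T, u t| ≤ (T : ℝ) * max C 0 := by
      calc |∑ t ∈ Finset.range T, u t| ≤ ∑ t ∈ Finset.range T, |u t| :=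
            Finset.abs_sum_le_sum_abs _ _
        _ ≤ ∑ _t ∈ Finset.range T, max C 0 :=
            Finset.sum_le_sum (fun i _ => (hC i).trans (le_max_left _ _))
        _ = (T : ℝ) * max C 0 := by simp [mul_comm]
    have hT : (0:ℝ) < T := by exact_mod_cast h
    rw [avg, abs_div, abs_of_nonneg hT.le, div_le_iff₀ hT]
    nlinarith

theorem stmt_9 (u v : ℕ → ℝ) (hu : Bdd u) (hv : Bdd v)
    (hfix : ∃ k : ℕ, 0 < k ∧ ∀ T : ℕ, 1 ≤ T →
      ∑ t ∈ Finset.range (k * T), v t ≤ ∑ t ∈ Finset.range (k * T), u t) :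
    W1 v ≤ W1 u := by
  obtain ⟨k, hk, hle⟩ := hfix
  obtain ⟨Cu, hCu0, hCu⟩ := avg_bdd hu
  obtain ⟨Cv, hCv0, hCv⟩ := avg_bdd hv
  have hbu : ∀ m : ℕ → ℕ, IsBoundedUnder (· ≤ ·) atTop (fun T : ℕ => avg u (m T)) :=
    fun m => isBoundedUnder_of ⟨Cu, fun T => (abs_le.1 (hCu _)).2⟩
  have hbu' : ∀ m : ℕ → ℕ, IsBoundedUnder (· ≥ ·) atTop (fun T : ℕ => avg u (m T)) :=
    fun m => isBoundedUnder_of ⟨-Cu, fun T => (abs_le.1 (hCu _)).1⟩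
  have hbv : ∀ m : ℕ → ℕ, IsBoundedUnder (· ≤ ·) atTop (fun T : ℕ => avg v (m T)) :=
    fun m => isBoundedUnder_of ⟨Cv, fun T => (abs_le.1 (hCv _)).2⟩
  have hbv' : ∀ m : ℕ → ℕ, IsBoundedUnder (· ≥ ·) atTop (fun T : ℕ => avg v (m T)) :=
    fun m => isBoundedUnder_of ⟨-Cv, fun T => (abs_le.1 (hCv _)).1⟩
  have hbddu : BddAbove (Set.range fun j : ℕ =>
      liminf (fun T : ℕ => avg u ((j + 1) * T)) atTop) := by
    refine ⟨Cu, ?_⟩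
    rintro x ⟨j, rfl⟩
    exact liminf_le_of_frequently_le
      (Frequently.of_forall fun T => (abs_le.1 (hCu _)).2) (hbu' _)
  apply ciSup_le
  intro j
  have hmap : Tendsto (fun T : ℕ => k * T) atTop atTop :=
    Tendsto.const_mul_atTop' hk tendsto_id
  -- step 1 : liminf along (j+1)*T ≤ liminf along (j+1)*(k*T)
  have step1 : liminf (fun T : ℕ => avg v ((j + 1) * T)) atTop ≤
      liminf (fun T : ℕ => avg v ((j + 1) * (k * T))) atTop := by
    have hg : IsCoboundedUnder (· ≥ ·) (map (fun T : ℕ => k * T) atTop)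
        (fun T : ℕ => avg v ((j + 1) * T)) := by
      rw [IsCoboundedUnder, map_map]
      exact (hbv (fun T => (j + 1) * (k * T))).isCoboundedUnder_ge
    have h1 : liminf (fun T : ℕ => avg v ((j + 1) * T)) atTop ≤
        liminf (fun T : ℕ => avg v ((j + 1) * T)) (map (fun T : ℕ => k * T) atTop) :=
      liminf_le_liminf_of_le hmap (hbv' _) hg
    rw [← liminf_comp] at h1
    exact h1
  -- step 2 : pointwise comparison at multiples of k
  have step2 : liminf (fun T : ℕ => avg v ((j + 1) * (k * T))) atTop ≤
      liminf (fun T : ℕ => avg u ((j + 1) * (k * T))) atTop := by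
    apply liminf_le_liminf _ (hbv' _) (hbu _).isCoboundedUnder_ge
    filter_upwards [eventually_ge_atTop 1] with T hT
    have h1 : 1 ≤ (j + 1) * T := Nat.one_le_of_lt (Nat.lt_of_lt_of_le hT
      (Nat.le_mul_of_pos_left T (Nat.succ_pos j)))
    have hsum := hle ((j + 1) * T) h1
    have hrw : (j + 1) * (k * T) = k * ((j + 1) * T) := by ring
    have hpos : (0:ℝ) ≤ ((k * ((j + 1) * T) : ℕ) : ℝ) := by positivity
    rw [avg, avg, hrw]
    exact div_le_div_of_nonneg_right hsum hpos
  -- step 3 : re-index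
  have step3 : liminf (fun T : ℕ => avg u ((j + 1) * (k * T))) atTop ≤ W1 u := by
    have heq : (fun T : ℕ => avg u ((j + 1) * (k * T))) =
        fun T : ℕ => avg u (((j + 1) * k - 1 + 1) * T) := by
      funext T
      congr 1
      have : (j + 1) * k - 1 + 1 = (j + 1) * k := Nat.succ_pred_eq_of_pos (Nat.mul_pos (Nat.succ_pos j) hk)
      rw [this]; ring
    rw [heq]
    exact le_ciSup hbddu ((j + 1) * k - 1)
  exact step1.trans (step2.trans step3)
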